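/- Fix integers i and n with n sufficiently large, J, K ∈ ℂ, and consider the operator E_{-n} = -∑_{m,k∈ℤ} x_{k+m-n} ∂x_k ∂x_m + ∑_{k>0} y_k ∂x_{-k+n} + 2K ∑_{m>0} m ∂y_m ∂x_{m+n} + (-Kn+J) ∂x_n on ℂ[x_n : n∈ℤ][y_m : m≥1]. For any polynomial v and any j ∈ ℤ, there exists N such that for all n > N: E_{-n}(v) = y_{n-j} ∂x_j(v) + v', where v' satisfies ∂y_{n-j}(v') = 0. -/

import Mathlib

open MvPolynomial

/-- Index type for the variables `x_n (n ∈ ℤ)` and `y_m (m ≥ 1)`. -/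
abbrev XYVar : Type := ℤ ⊕ ℕ+

/-- The operator `E_{-n} = -∑_{m,k} x_{k+m-n} ∂x_k ∂x_m + ∑_{k>0} y_k ∂x_{n-k}
+ 2K ∑_{m>0} m ∂y_m ∂x_{m+n} + (-Kn+J) ∂x_n` of the first free field realization. -/
noncomputable def EnegOp (J K : ℂ) (n : ℤ) (p : MvPolynomial XYVar ℂ) : MvPolynomial XYVar ℂ :=
  -(∑ᶠ s : ℤ × ℤ, X (Sum.inl (s.1 + s.2 - n)) * pderiv (Sum.inl s.1) (pderiv (Sum.inl s.2) p)) +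
  (∑ᶠ k : ℕ+, X (Sum.inr k) * pderiv (Sum.inl (n - (k : ℕ))) p) +
  (2 * K) • (∑ᶠ m : ℕ+, ((m : ℕ) : ℂ) • pderiv (Sum.inr m) (pderiv (Sum.inl ((m : ℕ) + n)) p)) +
  (-K * (n : ℂ) + J) • pderiv (Sum.inl n) p

lemma pderiv_comm' {σ R : Type*} [CommSemiring R] (i k : σ) (p : MvPolynomial σ R) :
    pderiv i (pderiv k p) = pderiv k (pderiv i p) := by
  classical
  have h3 : ∀ a b t : σ, (pderiv t) ((Pi.single a 1 : σ → MvPolynomial σ R) b) = 0 := by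
    intro a b t
    rcases eq_or_ne a b with h | h
    · subst h; simp [Pi.single_eq_same]
    · simp [Pi.single_eq_of_ne h.symm]
  induction p using MvPolynomial.induction_on with
  | C a => simp
  | add p q hp hq => simp [hp, hq]
  | mul_X p s hp =>
    simp only [pderiv_mul, map_add, pderiv_mul, hp, pderiv_X]
    simp [h3]
    ring


/-- for fixed `v` and `j`, and all sufficiently large `n`,
`E_{-n}(v) = y_{n-j} ∂x_j(v) + v'` with `∂y_{n-j}(v') = 0`. -/
theorem stmt15 (J K : ℂ) (v : MvPolynomial XYVar ℂ) (j : ℤ) :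
    ∃ N : ℤ, j ≤ N ∧ ∀ n : ℤ, N < n → ∃ v' : MvPolynomial XYVar ℂ,
      EnegOp J K n v = X (Sum.inr (n - j).toNat.toPNat') * pderiv (Sum.inl j) v + v' ∧
      pderiv (Sum.inr (n - j).toNat.toPNat') v' = 0 := by
  classical
  set F : XYVar → ℕ := Sum.elim Int.natAbs (fun m => (m : ℕ)) with hF
  set B : ℕ := v.vars.sup F with hB
  refine ⟨(B : ℤ) + |j| + 1, by have := abs_nonneg j; have : (0:ℤ) ≤ B := Int.natCast_nonneg B; have := le_abs_self j; omega, ?_⟩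
  intro n hn
  have hBv : ∀ s : XYVar, s ∈ v.vars → F s ≤ B := by
    intro s hs
    exact Finset.le_sup (f := F) (b := s) hs
  have hx : ∀ k : ℤ, (B : ℤ) < |k| → Sum.inl k ∉ v.vars := by
    intro k hk hmem
    have := hBv _ hmem
    simp only [hF, Sum.elim_inl] at this
    rw [Int.abs_eq_natAbs] at hk
    exact absurd (Int.ofNat_le.mpr this) (not_le.mpr hk)
  have hy : ∀ m : ℕ+, (B : ℤ) < ((m : ℕ) : ℤ) → Sum.inr m ∉ v.vars := by
    intro m hm hmem
    have := hBv _ hmem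
    simp only [hF, Sum.elim_inr] at this
    exact absurd (Int.ofNat_le.mpr this) (not_le.mpr hm)
  have hjabs := le_abs_self j
  have hjabs' := neg_abs_le j
  -- the distinguished variable
  have hnjpos : (0:ℤ) < n - j := by omega
  set t : ℕ+ := (n - j).toNat.toPNat' with ht
  have htc : ((t : ℕ) : ℤ) = n - j := by
    rw [ht, PNat.toPNat'_coe (by omega : 0 < (n - j).toNat), Int.toNat_of_nonneg (by omega)]
  have hyt : Sum.inr t ∉ v.vars := hy t (by rw [htc]; omega)
  have hvt : pderiv (Sum.inr t) v = 0 := pderiv_eq_zero_of_notMem_vars hyt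
  have aux : ∀ i : XYVar, pderiv (Sum.inr t) (pderiv i v) = 0 := by
    intro i; rw [pderiv_comm', hvt, map_zero]
  have auxd : ∀ i k : XYVar, pderiv (Sum.inr t) (pderiv i (pderiv k v)) = 0 := by
    intro i k; rw [pderiv_comm', aux k, map_zero]
  have hD : pderiv (Sum.inl n) v = 0 :=
    pderiv_eq_zero_of_notMem_vars (hx n (by rw [abs_of_pos (by omega)]; omega))
  have hC : ∀ m : ℕ+, pderiv (Sum.inl ((m : ℕ) + n)) v = 0 := by
    intro m
    refine pderiv_eq_zero_of_notMem_vars (hx _ ?_)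
    have hm1 : (1 : ℤ) ≤ ((m : ℕ) : ℤ) := by exact_mod_cast m.one_le
    rw [abs_of_pos (by omega)]; omega
  -- the two surviving sums
  set A : MvPolynomial XYVar ℂ :=
    ∑ᶠ s : ℤ × ℤ, X (Sum.inl (s.1 + s.2 - n)) * pderiv (Sum.inl s.1) (pderiv (Sum.inl s.2) v) with hA
  set Bs : MvPolynomial XYVar ℂ :=
    ∑ᶠ k : ℕ+, X (Sum.inr k) * pderiv (Sum.inl (n - (k : ℕ))) v with hBs
  have hE : EnegOp J K n v = -A + Bs := by
    rw [EnegOp, hD]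
    have h0 : (∑ᶠ m : ℕ+, ((m : ℕ) : ℂ) • pderiv (Sum.inr m) (pderiv (Sum.inl ((m : ℕ) + n)) v))
        = 0 := finsum_eq_zero_of_forall_eq_zero fun m => by rw [hC m, map_zero, smul_zero]
    rw [h0]
    simp
    rfl
  -- finiteness of supports
  have hAfin : (Function.support fun s : ℤ × ℤ =>
      X (Sum.inl (s.1 + s.2 - n)) * pderiv (Sum.inl s.1) (pderiv (Sum.inl s.2) v)).Finite := by
    have hfin : ((Sum.inl ⁻¹' (v.vars : Set XYVar)) ×ˢ (Sum.inl ⁻¹' (v.vars : Set XYVar)) :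
        Set (ℤ × ℤ)).Finite :=
      Set.Finite.prod (v.vars.finite_toSet.preimage Sum.inl_injective.injOn)
        (v.vars.finite_toSet.preimage Sum.inl_injective.injOn)
    refine hfin.subset ?_
    intro s hs
    simp only [Function.mem_support] at hs
    constructor
    · by_contra h
      simp only [Set.mem_preimage, Finset.mem_coe] at h
      rw [pderiv_comm', pderiv_eq_zero_of_notMem_vars h, map_zero, mul_zero] at hs
      exact hs rfl
    · by_contra h
      simp only [Set.mem_preimage, Finset.mem_coe] at h
      rw [pderiv_eq_zero_of_notMem_vars h, map_zero, mul_zero] at hs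
      exact hs rfl
  have hBfin : (Function.support fun k : ℕ+ =>
      X (Sum.inr k) * pderiv (Sum.inl (n - (k : ℕ))) v).Finite := by
    have hinj : Function.Injective fun k : ℕ+ => (Sum.inl (n - (k : ℕ)) : XYVar) := by
      intro a b hab
      simp only [Sum.inl.injEq] at hab
      have : ((a : ℕ) : ℤ) = ((b : ℕ) : ℤ) := by omega
      exact_mod_cast PNat.coe_injective (by exact_mod_cast this)
    refine (v.vars.finite_toSet.preimage hinj.injOn).subset ?_
    intro k hk
    simp only [Function.mem_support] at hk
    by_contra h
    simp only [Set.mem_preimage, Finset.mem_coe] at h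
    rw [pderiv_eq_zero_of_notMem_vars h, mul_zero] at hk
    exact hk rfl
  -- derivatives of the pieces
  have hpA : pderiv (Sum.inr t) A = 0 := by
    rw [hA]
    have hmap : pderiv (Sum.inr t) (∑ᶠ s : ℤ × ℤ,
        X (Sum.inl (s.1 + s.2 - n)) * pderiv (Sum.inl s.1) (pderiv (Sum.inl s.2) v))
        = ∑ᶠ s : ℤ × ℤ, pderiv (Sum.inr t)
          (X (Sum.inl (s.1 + s.2 - n)) * pderiv (Sum.inl s.1) (pderiv (Sum.inl s.2) v)) :=
      AddMonoidHom.map_finsum (pderiv (Sum.inr t)).toLinearMap.toAddMonoidHom hAfin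
    rw [hmap]
    refine finsum_eq_zero_of_forall_eq_zero fun s => ?_
    rw [pderiv_mul, pderiv_X_of_ne (by simp), auxd, mul_zero, zero_mul, add_zero]
  have hpB : pderiv (Sum.inr t) Bs = pderiv (Sum.inl j) v := by
    rw [hBs]
    have hmap : pderiv (Sum.inr t) (∑ᶠ k : ℕ+,
        X (Sum.inr k) * pderiv (Sum.inl (n - (k : ℕ))) v)
        = ∑ᶠ k : ℕ+, pderiv (Sum.inr t)
          (X (Sum.inr k) * pderiv (Sum.inl (n - (k : ℕ))) v) :=
      AddMonoidHom.map_finsum (pderiv (Sum.inr t)).toLinearMap.toAddMonoidHom hBfin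
    rw [hmap]
    rw [finsum_eq_single _ t ?side]
    case side =>
      intro k hk
      rw [pderiv_mul, pderiv_X_of_ne (by simp [hk]), aux, mul_zero, zero_mul, add_zero]
    rw [pderiv_mul, pderiv_X_self, aux, mul_zero, add_zero, one_mul]
    have hj' : (n : ℤ) - ((t : ℕ) : ℤ) = j := by omega
    rw [hj']
  refine ⟨-A + Bs - X (Sum.inr t) * pderiv (Sum.inl j) v, by rw [hE]; ring, ?_⟩
  rw [map_sub, map_add, map_neg, hpA, hpB, pderiv_mul, pderiv_X_self, aux, mul_zero, add_zero,
    one_mul]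
  ring
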